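/- arXiv:1602.06386 — 2 statements merged into one kernel-verified Lean document; each statement's English description precedes it below -/
import Mathlib

section
/- Let k be a field, R = {(f, g) ∈ k[[t]] × k[[s]] : f(0) = g(0)}, B₁ = k[[t]] and B₂ = k[[s]] the R-modules given by the projections. Then for all integers j ≥ 0 and m ≥ 1: Ext^{2j+1}_R(B₁, B₂) ≅ k and Ext^{2m}_R(B₁, B₂) = 0. -/
open PowerSeries

noncomputable section

/-- The local ring of a node: pairs `(f, g) ∈ k[[t]] × k[[s]]` with `f(0) = g(0)`. -/
def nodeRing (k : Type) [Field k] : Subring (PowerSeries k × PowerSeries k) where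
  carrier := {p | constantCoeff (R := k) p.1 = constantCoeff (R := k) p.2}
  mul_mem' := by
    intro a b ha hb
    simp only [Set.mem_setOf_eq, Prod.fst_mul, Prod.snd_mul, map_mul] at *
    rw [ha, hb]
  one_mem' := by simp
  add_mem' := by
    intro a b ha hb
    simp only [Set.mem_setOf_eq, Prod.fst_add, Prod.snd_add, map_add] at *
    rw [ha, hb]
  zero_mem' := by simp
  neg_mem' := by
    intro a ha
    simp only [Set.mem_setOf_eq, Prod.fst_neg, Prod.snd_neg, map_neg] at *
    rw [ha]

variable (k : Type) [Field k]

/-- The first branch `B₁ = k[[t]]` as a module over the node ring (via the first projection). -/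
def B1 : Type := PowerSeries k

/-- The second branch `B₂ = k[[s]]` as a module over the node ring (via the second projection). -/
def B2 : Type := PowerSeries k

instance : CommRing (B1 k) := inferInstanceAs (CommRing (PowerSeries k))
instance : CommRing (B2 k) := inferInstanceAs (CommRing (PowerSeries k))

/-- The first projection `nodeRing k →+* k[[t]]`. -/
def nodeProj1 : nodeRing k →+* PowerSeries k :=
  (RingHom.fst (PowerSeries k) (PowerSeries k)).comp (nodeRing k).subtype

/-- The second projection `nodeRing k →+* k[[s]]`. -/
def nodeProj2 : nodeRing k →+* PowerSeries k :=
  (RingHom.snd (PowerSeries k) (PowerSeries k)).comp (nodeRing k).subtype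

instance : Module (nodeRing k) (B1 k) :=
  Module.compHom (PowerSeries k) (nodeProj1 k)

instance : Module (nodeRing k) (B2 k) :=
  Module.compHom (PowerSeries k) (nodeProj2 k)



/-- The residue field `k` of the node ring, as a module over it. -/
local instance : Module (nodeRing k) k :=
  Module.compHom k ((constantCoeff (R := k)).comp (nodeProj1 k))

open CategoryTheory Opposite

namespace NodeAux
variable {k : Type} [Field k]

lemma mem_nodeRing {p : PowerSeries k × PowerSeries k} :
    p ∈ nodeRing k ↔ constantCoeff (R := k) p.1 = constantCoeff (R := k) p.2 := Iff.rfl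

def t1 (k : Type) [Field k] : nodeRing k := ⟨(PowerSeries.X, 0), mem_nodeRing.2 (by simp)⟩
def t2 (k : Type) [Field k] : nodeRing k := ⟨(0, PowerSeries.X), mem_nodeRing.2 (by simp)⟩

lemma t1_mul_t2 : t1 k * t2 k = 0 := by
  apply Subtype.ext
  simp [t1, t2, Prod.ext_iff]

lemma smul_B2 (r : nodeRing k) (x : B2 k) :
    r • x = @HMul.hMul (PowerSeries k) (PowerSeries k) (PowerSeries k) _
      (r : PowerSeries k × PowerSeries k).2 x := rfl

lemma smul_B1 (r : nodeRing k) (x : B1 k) :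
    r • x = @HMul.hMul (PowerSeries k) (PowerSeries k) (PowerSeries k) _
      (r : PowerSeries k × PowerSeries k).1 x := rfl

lemma smul_k (r : nodeRing k) (c : k) : r • c = constantCoeff (R := k) (r : PowerSeries k × PowerSeries k).1 * c := rfl

lemma coeff_eq (r : nodeRing k) :
    constantCoeff (R := k) (r : PowerSeries k × PowerSeries k).1
      = constantCoeff (R := k) (r : PowerSeries k × PowerSeries k).2 := r.2

-- exactness lemmas
lemma ker_t2 (x : nodeRing k) (hx : t2 k * x = 0) : ∃ y, t1 k * y = x := by
  obtain ⟨⟨a, b⟩, h⟩ := x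
  have hb : b = 0 := by
    have := congrArg (fun z : nodeRing k => (z : PowerSeries k × PowerSeries k).2) hx
    simp [t2] at this
    exact this
  have ha0 : constantCoeff (R := k) a = 0 := by
    have : constantCoeff (R := k) a = constantCoeff (R := k) b := h
    rw [this, hb, map_zero]
  obtain ⟨a', ha'⟩ := (PowerSeries.X_dvd_iff).2 ha0
  refine ⟨⟨(a', PowerSeries.C (R := k) (constantCoeff (R := k) a')), mem_nodeRing.2 (by simp)⟩, ?_⟩
  apply Subtype.ext
  simp [t1, Prod.ext_iff, hb, ha'.symm]

lemma ker_t1 (x : nodeRing k) (hx : t1 k * x = 0) : ∃ y, t2 k * y = x := by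
  obtain ⟨⟨a, b⟩, h⟩ := x
  have ha : a = 0 := by
    have := congrArg (fun z : nodeRing k => (z : PowerSeries k × PowerSeries k).1) hx
    simp [t1] at this
    exact this
  have hb0 : constantCoeff (R := k) b = 0 := by
    rw [← h, ha, map_zero]
  obtain ⟨b', hb'⟩ := (PowerSeries.X_dvd_iff).2 hb0
  refine ⟨⟨(PowerSeries.C (R := k) (constantCoeff (R := k) b'), b'), mem_nodeRing.2 (by simp)⟩, ?_⟩
  apply Subtype.ext
  simp [t2, Prod.ext_iff, ha, hb'.symm]

lemma ker_proj (x : nodeRing k) (hx : (x : PowerSeries k × PowerSeries k).1 = 0) :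
    ∃ y, t2 k * y = x := by
  obtain ⟨⟨a, b⟩, h⟩ := x
  simp only at hx
  have hb0 : constantCoeff (R := k) b = 0 := by rw [← h, hx, map_zero]
  obtain ⟨b', hb'⟩ := (PowerSeries.X_dvd_iff).2 hb0
  refine ⟨⟨(PowerSeries.C (R := k) (constantCoeff (R := k) b'), b'), mem_nodeRing.2 (by simp)⟩, ?_⟩
  apply Subtype.ext
  simp [t2, Prod.ext_iff, hx, hb'.symm]

open CategoryTheory Limits

variable (k : Type) [Field k] in
/-- alternating multipliers -/
def tAlt : ℕ → nodeRing k := fun n => if Even n then t2 k else t1 k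

lemma tAlt_even {n : ℕ} (h : Even n) : tAlt k n = t2 k := if_pos h
lemma tAlt_odd {n : ℕ} (h : ¬ Even n) : tAlt k n = t1 k := if_neg h

lemma tAlt_mul (n : ℕ) : tAlt k n * tAlt k (n+1) = 0 := by
  rcases Nat.even_or_odd n with h | h
  · rw [tAlt_even h, tAlt_odd (by simp [Nat.even_add_one, h]), mul_comm, t1_mul_t2]
  · rw [tAlt_odd (by simpa using h), tAlt_even (by simpa [Nat.even_add_one] using h), t1_mul_t2]

variable (k : Type) [Field k] in
/-- multiplication map as a linear endomorphism of the node ring -/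
def mulMap (a : nodeRing k) : nodeRing k →ₗ[nodeRing k] nodeRing k where
  toFun x := a * x
  map_add' x y := mul_add a x y
  map_smul' r x := by
    simp only [smul_eq_mul, RingHom.id_apply]
    ring

variable (k : Type) [Field k] in
def Pcomplex : ChainComplex (ModuleCat (nodeRing k)) ℕ :=
  ChainComplex.of (fun _ => ModuleCat.of (nodeRing k) (nodeRing k))
    (fun n => ModuleCat.ofHom (mulMap k (tAlt k n)))
    (fun n => by
      apply ModuleCat.hom_ext
      apply LinearMap.ext
      intro x
      have key : ∀ y : nodeRing k, mulMap k (tAlt k n) (mulMap k (tAlt k (n+1)) y) = 0 := by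
        intro y
        show tAlt k n * (tAlt k (n+1) * y) = 0
        rw [← mul_assoc, tAlt_mul, zero_mul]
      exact key x)

lemma Pcomplex_d (n : ℕ) :
    (Pcomplex k).d (n+1) n = ModuleCat.ofHom (mulMap k (tAlt k n)) := by
  unfold Pcomplex
  exact ChainComplex.of_d (fun _ => ModuleCat.of (nodeRing k) (nodeRing k))
    (fun n => ModuleCat.ofHom (mulMap k (tAlt k n))) n

variable (k : Type) [Field k] in
/-- the augmentation map -/
def π0 : (ModuleCat.of (nodeRing k) (nodeRing k)) ⟶ (ModuleCat.of (nodeRing k) (B1 k)) :=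
  ModuleCat.ofHom
    { toFun := fun x => ((x : PowerSeries k × PowerSeries k).1 : B1 k)
      map_add' := fun x y => rfl
      map_smul' := fun r x => by
        rw [RingHom.id_apply]
        rfl }

lemma π0_surjective : Function.Surjective (π0 k) := by
  intro f
  exact ⟨⟨((f : PowerSeries k), PowerSeries.C (R := k) (constantCoeff (R := k) f)),
    mem_nodeRing.2 (by simp)⟩, rfl⟩

lemma d_π0_key (y : nodeRing k) : π0 k (mulMap k (tAlt k 0) y) = 0 := by
  show (((tAlt k 0 * y : nodeRing k) : PowerSeries k × PowerSeries k).1 : B1 k) = 0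
  rw [tAlt_even (Even.zero)]
  show (0 : PowerSeries k) * _ = 0
  rw [zero_mul]

lemma d_π0 : (Pcomplex k).d 1 0 ≫ π0 k = 0 := by
  rw [Pcomplex_d]
  apply ModuleCat.hom_ext
  apply LinearMap.ext
  intro x
  exact d_π0_key x

set_option maxHeartbeats 1000000 in
variable (k : Type) [Field k] in
def pres : ProjectiveResolution (ModuleCat.of (nodeRing k) (B1 k)) where
  complex := Pcomplex k
  projective n := (IsProjective.iff_projective _).mp inferInstance
  π := (ChainComplex.toSingle₀Equiv _ _).symm ⟨π0 k, d_π0⟩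
  quasiIso := ⟨fun n => by
    have hf0 : ((ChainComplex.toSingle₀Equiv (Pcomplex k)
        (ModuleCat.of (nodeRing k) (B1 k))).symm ⟨π0 k, d_π0⟩).f 0 = π0 k :=
      ChainComplex.toSingle₀Equiv_symm_apply_f_zero _ _
    cases n with
    | zero =>
      rw [ChainComplex.quasiIsoAt₀_iff, ShortComplex.quasiIso_iff_of_zeros']
      rotate_left
      · exact (Pcomplex k).shape 0 0 (by simp)
      · exact (HomologicalComplex.isZero_single_obj_X
          (ComplexShape.down ℕ) 0 (ModuleCat.of (nodeRing k) (B1 k)) 1 (by simp)).eq_of_src _ _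
      · exact ((ChainComplex.single₀ (ModuleCat (nodeRing k))).obj
          (ModuleCat.of (nodeRing k) (B1 k))).shape 0 0 (by simp)
      constructor
      · rw [ShortComplex.moduleCat_exact_iff]
        intro (x : nodeRing k) hx
        replace hx : π0 k x = 0 := by
          rw [← hf0]
          exact hx
        obtain ⟨y, hy⟩ := ker_proj x hx
        refine ⟨y, ?_⟩
        show (Pcomplex k).d 1 0 y = x
        rw [Pcomplex_d]
        show mulMap k (tAlt k 0) y = x
        show tAlt k 0 * y = x
        rw [tAlt_even (Even.zero), hy]
      · rw [ModuleCat.epi_iff_surjective]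
        intro f
        obtain ⟨x, hx⟩ := π0_surjective f
        refine ⟨x, ?_⟩
        rw [← hf0] at hx
        exact hx
    | succ n =>
      rw [quasiIsoAt_iff_exactAt' _ _ (ChainComplex.exactAt_succ_single_obj _ _)]
      rw [HomologicalComplex.exactAt_iff' _ (n+2) (n+1) n (by simp) (by simp)]
      rw [ShortComplex.moduleCat_exact_iff]
      intro (x : nodeRing k) hx
      replace hx : tAlt k n * x = 0 := by
        rwa [show ((Pcomplex k).sc' (n+2) (n+1) n).g = (Pcomplex k).d (n+1) n from rfl,
          Pcomplex_d] at hx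
      have hex : ∃ y, tAlt k (n+1) * y = x := by
        rcases Nat.even_or_odd n with h | h
        · rw [tAlt_even h] at hx
          rw [tAlt_odd (by simp [Nat.even_add_one, h])]
          exact ker_t2 x hx
        · rw [tAlt_odd (by simpa using h)] at hx
          rw [tAlt_even (by simpa [Nat.even_add_one] using h)]
          exact ker_t1 x hx
      obtain ⟨y, hy⟩ := hex
      refine ⟨y, ?_⟩
      show (Pcomplex k).d (n+2) (n+1) y = x
      rw [Pcomplex_d]
      exact hy⟩

section Homology
set_option synthInstance.maxHeartbeats 1000000
set_option maxHeartbeats 1000000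
variable {k : Type} [Field k]

abbrev Ymod (k : Type) [Field k] : ModuleCat (nodeRing k) := ModuleCat.of (nodeRing k) (B2 k)
abbrev Pfree (k : Type) [Field k] : ModuleCat (nodeRing k) := ModuleCat.of (nodeRing k) (nodeRing k)
abbrev Ccx (k : Type) [Field k] : CochainComplex (ModuleCat (nodeRing k)) ℕ :=
  (Pcomplex k).linearYonedaObj (nodeRing k) (Ymod k)

lemma hom_eval (f : Pfree k ⟶ Ymod k) (x : nodeRing k) : f x = x • f (1 : nodeRing k) := by
  conv_lhs => rw [show x = x • (1 : nodeRing k) by rw [smul_eq_mul, mul_one]]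
  rw [map_smul]

lemma smul_hom (r : nodeRing k) (f : Pfree k ⟶ Ymod k) :
    (r • f) (1 : nodeRing k) = r • (f (1 : nodeRing k)) := rfl

lemma t1_smul_B2 (b : B2 k) : t1 k • b = 0 := by
  rw [smul_B2]
  show (0 : PowerSeries k) * _ = _
  exact zero_mul (M₀ := PowerSeries k) _

lemma t2_smul_B2 (b : B2 k) :
    t2 k • b = @HMul.hMul (PowerSeries k) (PowerSeries k) (PowerSeries k) _ PowerSeries.X b := by
  rw [smul_B2]
  rfl

variable (k : Type) [Field k] in
/-- evaluation followed by constant coefficient, as a linear map to the residue field -/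
def φmap : (Pfree k ⟶ Ymod k) →ₗ[nodeRing k] k where
  toFun f := constantCoeff (R := k) (f (1 : nodeRing k))
  map_add' f g := by
    show constantCoeff (R := k) ((f + g) (1 : nodeRing k)) = _
    exact map_add (constantCoeff (R := k)) (f (1 : nodeRing k)) (g (1 : nodeRing k))
  map_smul' r f := by
    show constantCoeff (R := k) ((r • f) (1 : nodeRing k)) = r • constantCoeff (R := k) (f (1 : nodeRing k))
    rw [smul_hom, smul_B2, smul_k]
    exact (map_mul (constantCoeff (R := k)) _ (show PowerSeries k from f (1 : nodeRing k))).trans (by rw [coeff_eq])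

variable (k : Type) [Field k] in
def cHom (b : B2 k) : Pfree k ⟶ Ymod k :=
  ModuleCat.ofHom (LinearMap.toSpanSingleton (nodeRing k) (B2 k) b)

lemma cHom_one (b : B2 k) : cHom k b (1 : nodeRing k) = b := one_smul (nodeRing k) b

lemma Ccx_d_eq (n : ℕ) :
    (Ccx k).d n (n+1) =
      ModuleCat.ofHom (Linear.leftComp (nodeRing k) (Ymod k)
        (ModuleCat.ofHom (mulMap k (tAlt k n)))) := by
  rw [ChainComplex.linearYonedaObj_d, Pcomplex_d]
  rfl

lemma comp_mul_one (a : nodeRing k) (g : Pfree k ⟶ Ymod k) :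
    (ModuleCat.ofHom (mulMap k a) ≫ g) (1 : nodeRing k) = a • g (1 : nodeRing k) := by
  show g (a * 1) = a • g (1 : nodeRing k)
  rw [mul_one, hom_eval]

lemma mul_comp_zero_odd (g : Pfree k ⟶ Ymod k) :
    ModuleCat.ofHom (mulMap k (t1 k)) ≫ g = 0 := by
  apply ModuleCat.hom_ext
  apply LinearMap.ext_ring
  show (ModuleCat.ofHom (mulMap k (t1 k)) ≫ g) (1 : nodeRing k)
    = (0 : Pfree k ⟶ Ymod k) (1 : nodeRing k)
  rw [comp_mul_one, t1_smul_B2]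
  rfl

lemma mul_comp_t2_inj (g : Pfree k ⟶ Ymod k)
    (hg : ModuleCat.ofHom (mulMap k (t2 k)) ≫ g = 0) : g = 0 := by
  apply ModuleCat.hom_ext
  apply LinearMap.ext_ring
  have h1 : (ModuleCat.ofHom (mulMap k (t2 k)) ≫ g) (1 : nodeRing k) = 0 := by rw [hg]; rfl
  rw [comp_mul_one, t2_smul_B2] at h1
  have h2 : @HMul.hMul (PowerSeries k) (PowerSeries k) (PowerSeries k) _
      PowerSeries.X (g (1 : nodeRing k)) = 0 := h1
  rcases mul_eq_zero.mp h2 with h | h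
  · exact absurd h PowerSeries.X_ne_zero
  · show g (1 : nodeRing k) = (0 : Pfree k ⟶ Ymod k) (1 : nodeRing k)
    rw [h]
    rfl

lemma homology_odd_iso (j : ℕ) :
    Nonempty ((Ccx k).homology (2*j+1) ≅ ModuleCat.of (nodeRing k) k) := by
  have e1 : (Ccx k).homology (2*j+1) ≅ ((Ccx k).sc' (2*j) (2*j+1) (2*j+2)).homology :=
    (Ccx k).homologyIsoSc' (2*j) (2*j+1) (2*j+2)
      (by simpa using CochainComplex.prev_nat_succ (2*j))
      (by simpa using CochainComplex.next ℕ (2*j+1))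
  set S := (Ccx k).sc' (2*j) (2*j+1) (2*j+2) with hSdef
  have e2 : S.homology ≅ S.moduleCatLeftHomologyData.H := S.moduleCatHomologyIso
  have hSf : S.f = ModuleCat.ofHom (Linear.leftComp (nodeRing k) (Ymod k)
      (ModuleCat.ofHom (mulMap k (t2 k)))) := by
    show (Ccx k).d (2*j) (2*j+1) = _
    rw [Ccx_d_eq, tAlt_even (by simp)]
  have hSg : S.g = 0 := by
    show (Ccx k).d (2*j+1) (2*j+2) = _
    rw [Ccx_d_eq, tAlt_odd (by simp [Nat.even_add_one, parity_simps])]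
    apply ModuleCat.hom_ext
    apply LinearMap.ext
    intro f
    exact mul_comp_zero_odd (show Pfree k ⟶ Ymod k from f)
  have hg0 : ∀ f : S.X₂, S.g f = 0 := by
    intro f
    rw [hSg]
    rfl
  have hSf' : ∀ x : Pfree k ⟶ Ymod k,
      S.f x = (ModuleCat.ofHom (mulMap k (t2 k)) ≫ x : Pfree k ⟶ Ymod k) := by
    intro x
    rw [hSf]
    rfl
  set ψ : LinearMap.ker S.g.hom →ₗ[nodeRing k] k :=
    { toFun := fun f => φmap k (show Pfree k ⟶ Ymod k from f.1)
      map_add' := fun f g => (φmap k).map_add _ _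
      map_smul' := fun r f => (φmap k).map_smul r _ } with hψdef
  have hψsurj : Function.Surjective ψ := by
    intro c
    refine ⟨⟨cHom k ((PowerSeries.C (R := k) c : PowerSeries k) : B2 k), hg0 _⟩, ?_⟩
    show φmap k (cHom k _) = c
    show constantCoeff (R := k) ((cHom k _) (1 : nodeRing k)) = c
    exact (congrArg (constantCoeff (R := k)) (cHom_one (k := k) (PowerSeries.C (R := k) c))).trans (by simp)
  have hψker : LinearMap.ker ψ = LinearMap.range S.moduleCatToCycles := by
    apply le_antisymm
    · intro f hf
      replace hf : constantCoeff (R := k)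
          ((show Pfree k ⟶ Ymod k from f.1) (1 : nodeRing k)) = 0 := hf
      obtain ⟨h, hh⟩ := PowerSeries.X_dvd_iff.2 hf
      refine ⟨cHom k (h : B2 k), Subtype.ext ?_⟩
      show S.f (cHom k (h : B2 k)) = f.1
      rw [hSf' (cHom k (h : B2 k))]
      have : (ModuleCat.ofHom (mulMap k (t2 k)) ≫ cHom k (h : B2 k) : Pfree k ⟶ Ymod k)
          = (show Pfree k ⟶ Ymod k from f.1) := by
        apply ModuleCat.hom_ext
        apply LinearMap.ext_ring
        show (ModuleCat.ofHom (mulMap k (t2 k)) ≫ cHom k (h : B2 k)) (1 : nodeRing k)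
          = (show Pfree k ⟶ Ymod k from f.1) (1 : nodeRing k)
        rw [comp_mul_one]
        exact (congrArg (fun b : B2 k => t2 k • b) (cHom_one (k := k) h)).trans ((t2_smul_B2 h).trans hh.symm)
      exact this
    · rintro f ⟨x, rfl⟩
      rw [LinearMap.mem_ker]
      show φmap k (show Pfree k ⟶ Ymod k from S.f x) = 0
      rw [hSf' (show Pfree k ⟶ Ymod k from x)]
      show constantCoeff (R := k) ((ModuleCat.ofHom (mulMap k (t2 k)) ≫
        (show Pfree k ⟶ Ymod k from x)) (1 : nodeRing k)) = 0
      rw [comp_mul_one, t2_smul_B2]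
      exact (map_mul (constantCoeff (R := k)) PowerSeries.X _).trans (by simp)
  have e3 : (↥(LinearMap.ker S.g.hom) ⧸ LinearMap.range S.moduleCatToCycles) ≃ₗ[nodeRing k] k :=
    (Submodule.quotEquivOfEq _ _ hψker.symm).trans (ψ.quotKerEquivOfSurjective hψsurj)
  exact ⟨e1 ≪≫ e2 ≪≫ e3.toModuleIso⟩

lemma homology_even_zero (j : ℕ) :
    Limits.IsZero ((Ccx k).homology (2*j+2)) := by
  rw [← HomologicalComplex.exactAt_iff_isZero_homology]
  rw [HomologicalComplex.exactAt_iff' _ (2*j+1) (2*j+2) (2*j+3)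
    (by simpa using CochainComplex.prev_nat_succ (2*j+1))
    (by simpa using CochainComplex.next ℕ (2*j+2))]
  rw [ShortComplex.moduleCat_exact_iff]
  set S := (Ccx k).sc' (2*j+1) (2*j+2) (2*j+3) with hSdef
  have hSg' : ∀ x : Pfree k ⟶ Ymod k,
      S.g x = (ModuleCat.ofHom (mulMap k (t2 k)) ≫ x : Pfree k ⟶ Ymod k) := by
    intro x
    have : S.g = ModuleCat.ofHom (Linear.leftComp (nodeRing k) (Ymod k)
        (ModuleCat.ofHom (mulMap k (t2 k)))) := by
      show (Ccx k).d (2*j+2) (2*j+3) = _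
      rw [Ccx_d_eq, tAlt_even (by simp [parity_simps])]
    rw [this]
    rfl
  intro x hx
  have h1 : (ModuleCat.ofHom (mulMap k (t2 k)) ≫
      (show Pfree k ⟶ Ymod k from x) : Pfree k ⟶ Ymod k) = 0 :=
    (hSg' (show Pfree k ⟶ Ymod k from x)).symm.trans hx
  have hx0 : (show Pfree k ⟶ Ymod k from x) = 0 := mul_comp_t2_inj _ h1
  exact ⟨0, by rw [map_zero]; exact hx0.symm⟩

end Homology
end NodeAux

theorem ext_branch1_branch2 (j m : ℕ) (hm : 1 ≤ m) :
    Nonempty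
      ((((Ext (nodeRing k) (ModuleCat (nodeRing k)) (2 * j + 1)).obj
            (op (ModuleCat.of (nodeRing k) (B1 k)))).obj (ModuleCat.of (nodeRing k) (B2 k))) ≅
        ModuleCat.of (nodeRing k) k) ∧
    Limits.IsZero
      ((((Ext (nodeRing k) (ModuleCat (nodeRing k)) (2 * m)).obj
            (op (ModuleCat.of (nodeRing k) (B1 k)))).obj (ModuleCat.of (nodeRing k) (B2 k))) ) := by
  constructor
  · obtain ⟨e⟩ := NodeAux.homology_odd_iso (k := k) j
    exact ⟨((NodeAux.pres k).isoExt (2*j+1) (ModuleCat.of (nodeRing k) (B2 k))) ≪≫ e⟩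
  · obtain ⟨m', rfl⟩ := Nat.exists_eq_add_of_le hm
    refine Limits.IsZero.of_iso ?_
      ((NodeAux.pres k).isoExt (2*(1+m')) (ModuleCat.of (nodeRing k) (B2 k)))
    rw [show 2*(1+m') = 2*m'+2 by ring]
    exact NodeAux.homology_even_zero m'

end
end

section
/- Let k be a field, A = k[[x]], R = A[z]/(z²), and M a finitely generated R-module with no x-torsion (i.e. x acts injectively on M). Then Ext¹_R(M, R) = 0, and consequently M is reflexive: the canonical map M → Hom_R(Hom_R(M, R), R) is an isomorphism. -/
set_option synthInstance.maxHeartbeats 400000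
set_option maxHeartbeats 4000000

/-!
Let `k` be a field, `A = k[[x]]`, `R = A[z]/(z²)` (dual numbers over `A`), and `M` a
finitely generated `R`-module on which `x` acts injectively (i.e. `M` is torsion free).
Then `Ext¹_R(M, R) = 0`, and `M` is reflexive: the canonical evaluation map
`M → Hom_R(Hom_R(M, R), R)` is bijective.
-/

open CategoryTheory Opposite Function

noncomputable section

variable (k : Type) [Field k]

/-- `A = k[[x]]`. -/
abbrev Ak := PowerSeries k

abbrev Rk := DualNumber (Ak k)

-- the element x
def xx : Rk k := TrivSqZeroExt.inl PowerSeries.X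

-- ring hom p : Rk k →+* DualNumber k
def pp : Rk k →+* DualNumber k where
  toFun r := TrivSqZeroExt.inl (PowerSeries.constantCoeff r.fst) +
    TrivSqZeroExt.inr (PowerSeries.constantCoeff r.snd)
  map_one' := by ext <;> simp
  map_mul' a b := by
    ext
    · simp [TrivSqZeroExt.fst_mul]
    · simp [TrivSqZeroExt.snd_mul, smul_eq_mul, mul_comm]
  map_zero' := by ext <;> simp
  map_add' a b := by ext <;> simp

lemma pp_surj : Surjective (pp k) := by
  intro c
  exact ⟨⟨PowerSeries.C c.fst, PowerSeries.C c.snd⟩, by ext <;> simp [pp]⟩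

lemma xreg : ∀ {a b : Rk k}, xx k * a = xx k * b → a = b := by
  intro a b h
  have h1 := congrArg TrivSqZeroExt.fst h
  have h2 := congrArg TrivSqZeroExt.snd h
  simp [xx, TrivSqZeroExt.fst_mul, TrivSqZeroExt.snd_mul] at h1 h2
  exact TrivSqZeroExt.ext h1 h2

lemma ker_pp {r : Rk k} : pp k r = 0 ↔ ∃ s, r = xx k * s := by
  constructor
  · intro h
    have h1 : PowerSeries.constantCoeff r.fst = 0 := by simpa [pp] using congrArg TrivSqZeroExt.fst h
    have h2 : PowerSeries.constantCoeff r.snd = 0 := by simpa [pp] using congrArg TrivSqZeroExt.snd h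
    rw [← PowerSeries.X_dvd_iff] at h1 h2
    obtain ⟨a, ha⟩ := h1
    obtain ⟨b, hb⟩ := h2
    refine ⟨TrivSqZeroExt.inl a + TrivSqZeroExt.inr b, ?_⟩
    ext <;> simp [xx, TrivSqZeroExt.fst_mul, TrivSqZeroExt.snd_mul, ha, hb]
  · rintro ⟨s, rfl⟩
    ext <;> simp [pp, xx, TrivSqZeroExt.fst_mul, TrivSqZeroExt.snd_mul]
-- noetherian
instance : IsNoetherianRing (Rk k) := by
  have e : Rk k ≃ₗ[Ak k] (Ak k × Ak k) :=
    { toFun := fun r => (r.fst, r.snd)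
      map_add' := fun a b => by simp
      map_smul' := fun c a => by simp
      invFun := fun a => ⟨a.1, a.2⟩
      left_inv := fun a => rfl
      right_inv := fun a => rfl }
  have : Module.Finite (Ak k) (Rk k) := Module.Finite.equiv e.symm
  have h1 : IsNoetherian (Ak k) (Rk k) := isNoetherian_of_isNoetherianRing_of_finite _ _
  show IsNoetherian (Rk k) (Rk k)
  exact isNoetherian_of_tower (Ak k) (S := Rk k) (M := Rk k) h1

lemma xx_jac : xx k ∈ Ideal.jacobson (⊥ : Ideal (Rk k)) := by
  rw [Ideal.mem_jacobson_bot]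
  intro y
  rw [TrivSqZeroExt.isUnit_iff_isUnit_fst]
  have : (xx k * y + 1).fst = PowerSeries.X * y.fst + 1 := by
    simp [xx, TrivSqZeroExt.fst_mul]
  rw [this, PowerSeries.isUnit_iff_constantCoeff]
  simp

-- Baer criterion for k[ε]
lemma baer_dual : Module.Baer (DualNumber k) (DualNumber k) := by
  intro I g
  by_cases h1 : ∃ u ∈ I, IsUnit u
  · obtain ⟨u, hu, hu'⟩ := h1
    have hI : I = ⊤ := Ideal.eq_top_of_isUnit_mem I hu hu'
    refine ⟨g.comp (LinearMap.codRestrict (Submodule.restrictScalars _ I) LinearMap.id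
      (fun r => by rw [hI]; trivial)), fun x hx => rfl⟩
  · push_neg at h1
    by_cases h2 : ∃ a ∈ I, a ≠ (0 : DualNumber k)
    · obtain ⟨a, ha, ha0⟩ := h2
      have hafst : a.fst = 0 := by
        by_contra h
        exact h1 a ha (TrivSqZeroExt.isUnit_iff_isUnit_fst.2 (isUnit_iff_ne_zero.2 h))
      have hasnd : a.snd ≠ 0 := fun h => ha0 (TrivSqZeroExt.ext hafst h)
      set c : DualNumber k := g ⟨a, ha⟩ with hc
      have hac : a * c = 0 := by
        have : a • g ⟨a, ha⟩ = g (a • ⟨a, ha⟩) := (g.map_smul a ⟨a, ha⟩).symm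
        have haa : a * a = 0 := by
          ext
          · simp [TrivSqZeroExt.fst_mul, hafst]
          · simp [TrivSqZeroExt.snd_mul, hafst]
        have ha2 : a • (⟨a, ha⟩ : I) = 0 := Subtype.ext (by show a * a = 0; exact haa)
        rw [ha2, map_zero] at this
        simpa [smul_eq_mul] using this
      have hcfst : c.fst = 0 := by
        have := congrArg TrivSqZeroExt.snd hac
        simp [TrivSqZeroExt.snd_mul, hafst, smul_eq_mul] at this
        rcases this with h | h
        · exact absurd h hasnd
        · exact h
      set b : DualNumber k := TrivSqZeroExt.inl (c.snd * a.snd⁻¹) with hb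
      refine ⟨LinearMap.id.smulRight b, fun y hy => ?_⟩
      have hyfst : y.fst = 0 := by
        by_contra h
        exact h1 y hy (TrivSqZeroExt.isUnit_iff_isUnit_fst.2 (isUnit_iff_ne_zero.2 h))
      -- y = (y.snd / a.snd) • a
      have hya : y = (TrivSqZeroExt.inl (y.snd * a.snd⁻¹) : DualNumber k) * a := by
        ext
        · simp [TrivSqZeroExt.fst_mul, hyfst, hafst]
        · simp [TrivSqZeroExt.snd_mul, hafst, smul_eq_mul, mul_assoc,
            inv_mul_cancel₀ hasnd]
      have : g ⟨y, hy⟩ = (TrivSqZeroExt.inl (y.snd * a.snd⁻¹) : DualNumber k) • g ⟨a, ha⟩ := by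
        rw [← map_smul]
        congr 1
        refine Subtype.ext ?_
        show y = TrivSqZeroExt.inl (y.snd * a.snd⁻¹) * a
        exact hya
      rw [this]
      show y * b = _
      rw [smul_eq_mul, ← hc]
      ext
      · simp [hb, TrivSqZeroExt.fst_mul, hyfst, hcfst]
      · simp [hb, TrivSqZeroExt.snd_mul, hyfst, hcfst, smul_eq_mul]
        ring
    · push_neg at h2
      refine ⟨0, fun y hy => ?_⟩
      have : y = 0 := h2 y hy
      subst this
      show (0 : DualNumber k) = g 0
      rw [map_zero]

lemma pp_xx : pp k (xx k) = 0 := by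
  refine TrivSqZeroExt.ext ?_ ?_ <;> simp [pp, xx]

-- generic lift helper
lemma lift_helper {R R' : Type} [CommRing R] [CommRing R'] {σ : R →+* R'}
    [RingHomSurjective σ]
    {A B C : Type} [AddCommGroup A] [AddCommGroup B] [AddCommGroup C]
    [Module R A] [Module R' B] [Module R' C]
    (f : A →ₛₗ[σ] B) (g : A →ₛₗ[σ] C) (hfg : ∀ a, f a = 0 → g a = 0) :
    ∃ h : (LinearMap.range f) →ₗ[R'] C,
      ∀ a : A, h ⟨f a, LinearMap.mem_range_self f a⟩ = g a := by
  have hσ : Surjective σ := RingHomSurjective.is_surjective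
  have wd : ∀ a a' : A, f a = f a' → g a = g a' := by
    intro a a' h
    have := hfg (a - a') (by rw [map_sub, h, sub_self])
    rw [map_sub, sub_eq_zero] at this
    exact this
  have rep : ∀ y : LinearMap.range f, ∃ a : A, f a = y.1 := fun y => y.2
  choose repr hrepr using rep
  refine ⟨{ toFun := fun y => g (repr y)
            map_add' := ?_
            map_smul' := ?_ }, ?_⟩
  · intro y z
    show g (repr (y + z)) = g (repr y) + g (repr z)
    rw [← map_add]
    refine wd _ _ ?_
    rw [map_add, hrepr, hrepr, hrepr]
    rfl
  · intro r' y
    obtain ⟨r, rfl⟩ := hσ r'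
    show g (repr (σ r • y)) = σ r • g (repr y)
    rw [← g.map_smulₛₗ]
    refine wd _ _ ?_
    rw [f.map_smulₛₗ, hrepr, hrepr]
    rfl
  · intro a
    exact wd _ _ (hrepr ⟨f a, LinearMap.mem_range_self f a⟩)

section LemmaA
variable {k}
variable {F : Type} [AddCommGroup F] [Module (Rk k) F]
  {ι : Type} [Fintype ι] [DecidableEq ι] (b : Module.Basis ι (Rk k) F)

/-- coordinatewise reduction mod x, as a `pp`-semilinear map -/
def Pmap : F →ₛₗ[pp k] (ι → DualNumber k) where
  toFun v := fun i => pp k (b.repr v i)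
  map_add' v w := by funext i; simp [map_add]
  map_smul' r v := by funext i; simp [map_smul, smul_eq_mul, map_mul]

include b in
lemma step_lemma (K : Submodule (Rk k) F)
    (hK : ∀ f : F, xx k • f ∈ K → f ∈ K) (φ₀ : K →ₗ[Rk k] Rk k) :
    ∃ (ψ : F →ₗ[Rk k] Rk k) (φ' : K →ₗ[Rk k] Rk k),
      ∀ y : K, φ₀ y = ψ y.1 + xx k * φ' y := by
  haveI : RingHomSurjective (pp k) := ⟨pp_surj k⟩
  set P := Pmap b with hP
  -- semilinear maps on K
  set f : K →ₛₗ[pp k] (ι → DualNumber k) := P.comp (K.subtype) with hf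
  set g : K →ₛₗ[pp k] DualNumber k :=
    { toFun := fun a => pp k (φ₀ a)
      map_add' := fun a b => by show pp k (φ₀ (a + b)) = _; rw [map_add, map_add]
      map_smul' := fun r a => by
        show pp k (φ₀ (r • a)) = _
        rw [map_smul, smul_eq_mul, map_mul]; rfl } with hg
  have hfg : ∀ a : K, f a = 0 → g a = 0 := by
    intro a ha
    have hcoord : ∀ i, ∃ s, b.repr a.1 i = xx k * s := by
      intro i
      have : pp k (b.repr a.1 i) = 0 := congrFun ha i
      exact (ker_pp k).1 this
    choose s hs using hcoord
    set w : F := ∑ i, s i • b i with hw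
    have haw : a.1 = xx k • w := by
      conv_lhs => rw [← b.sum_repr a.1]
      rw [hw, Finset.smul_sum]
      refine Finset.sum_congr rfl (fun i _ => ?_)
      rw [hs i, smul_smul]
    have hwK : w ∈ K := hK w (by rw [← haw]; exact a.2)
    have ha' : a = xx k • (⟨w, hwK⟩ : K) := Subtype.ext haw
    show pp k (φ₀ a) = 0
    rw [ha', map_smul, smul_eq_mul, map_mul, pp_xx, zero_mul]
  obtain ⟨φbar, hφbar⟩ := lift_helper f g hfg
  obtain ⟨ψbar, hψbar⟩ := (baer_dual k).injective.out
    (LinearMap.range f).subtype (Submodule.injective_subtype _) φbar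
  -- lift ψbar to R-linear ψ
  have hc : ∀ i : ι, ∃ c : Rk k, pp k c = ψbar (Pi.single i 1) := fun i =>
    pp_surj k _
  choose c hc using hc
  set ψ : F →ₗ[Rk k] Rk k := ∑ i, c i • b.coord i with hψ
  have key : ∀ v : F, pp k (ψ v) = ψbar (P v) := by
    intro v
    have hPv : P v = ∑ i, pp k (b.repr v i) • (Pi.single i 1 : ι → DualNumber k) := by
      funext j
      rw [Finset.sum_apply]
      simp only [Pi.smul_apply, Pi.single_apply, smul_eq_mul, mul_ite, mul_one, mul_zero]
      rw [Finset.sum_ite_eq Finset.univ j (fun i => pp k (b.repr v i))]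
      simp only [Finset.mem_univ, if_true]
      rfl
    rw [hPv, map_sum]
    rw [hψ, LinearMap.sum_apply, map_sum]
    refine Finset.sum_congr rfl (fun i _ => ?_)
    rw [LinearMap.smul_apply, Module.Basis.coord_apply, smul_eq_mul, map_mul, hc i,
      ψbar.map_smul, smul_eq_mul, mul_comm]
  have hdiff : ∀ y : K, ∃ s, φ₀ y - ψ y.1 = xx k * s := by
    intro y
    rw [← ker_pp k, map_sub]
    have h1 : pp k (ψ y.1) = ψbar (P y.1) := key y.1
    have h2 : pp k (φ₀ y) = φbar ⟨f y, LinearMap.mem_range_self f y⟩ := (hφbar y).symm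
    have h3 : ψbar (P y.1) = φbar ⟨f y, LinearMap.mem_range_self f y⟩ := by
      have := hψbar ⟨f y, LinearMap.mem_range_self f y⟩
      simpa [hf] using this
    rw [h1, h2, h3, sub_self]
  choose s hs using hdiff
  refine ⟨ψ, { toFun := s
               map_add' := ?_
               map_smul' := ?_ }, ?_⟩
  · intro y z
    refine xreg k ?_
    show xx k * s (y + z) = xx k * (s y + s z)
    rw [mul_add, ← hs (y + z), ← hs y, ← hs z]
    simp only [map_add, Submodule.coe_add]
    ring
  · intro r y
    refine xreg k ?_
    show xx k * s (r • y) = xx k * (r • s y)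
    rw [smul_eq_mul, mul_left_comm, ← hs (r • y), ← hs y]
    simp only [map_smul, Submodule.coe_smul, smul_eq_mul]
    ring
  · intro y
    have := hs y
    show φ₀ y = ψ y.1 + xx k * s y
    rw [← this]
    ring

include b in
lemma extend_functional (K : Submodule (Rk k) F)
    (hK : ∀ f : F, xx k • f ∈ K → f ∈ K) (φ : K →ₗ[Rk k] Rk k) :
    ∃ ψ : F →ₗ[Rk k] Rk k, ∀ (y : F) (hy : y ∈ K), ψ y = φ ⟨y, hy⟩ := by
  have step := step_lemma b K hK
  -- Nakayama
  haveI hFfin : Module.Finite (Rk k) F := Module.Finite.of_basis b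
  haveI : IsNoetherian (Rk k) F := isNoetherian_of_isNoetherianRing_of_finite _ _
  haveI : Module.Finite (Rk k) K := Module.Finite.iff_fg.2 (IsNoetherian.noetherian K)
  haveI : IsNoetherian (Rk k) (K →ₗ[Rk k] Rk k) := inferInstance
  set restr : (F →ₗ[Rk k] Rk k) →ₗ[Rk k] (K →ₗ[Rk k] Rk k) :=
    LinearMap.lcomp (Rk k) (Rk k) K.subtype with hrestr
  set Q := (K →ₗ[Rk k] Rk k) ⧸ (LinearMap.range restr) with hQ
  haveI : Module.Finite (Rk k) (K →ₗ[Rk k] Rk k) :=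
    Module.finite_def.2 (IsNoetherian.noetherian ⊤)
  haveI : Module.Finite (Rk k) Q :=
    Module.Finite.of_surjective (M := K →ₗ[Rk k] Rk k) (P := Q)
      (LinearMap.range restr).mkQ (Submodule.mkQ_surjective _)
  have hsmul : (⊤ : Submodule (Rk k) Q) ≤ (Ideal.span {xx k}) • ⊤ := by
    intro q _
    obtain ⟨φ₀, rfl⟩ := Submodule.mkQ_surjective (LinearMap.range restr) q
    obtain ⟨ψ, φ', hψφ'⟩ := step φ₀
    have : φ₀ - xx k • φ' = restr ψ := by
      refine LinearMap.ext fun y => ?_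
      have := hψφ' y
      simp only [LinearMap.sub_apply, LinearMap.smul_apply, smul_eq_mul]
      rw [this]
      show ψ y.1 + xx k * φ' y - xx k * φ' y = ψ y.1
      ring
    have h0 : (LinearMap.range restr).mkQ φ₀ = xx k • (LinearMap.range restr).mkQ φ' := by
      rw [← map_smul, ← sub_eq_zero, ← map_sub, Submodule.mkQ_apply,
        Submodule.Quotient.mk_eq_zero]
      rw [this]
      exact LinearMap.mem_range_self restr ψ
    rw [h0]
    exact Submodule.smul_mem_smul (Ideal.subset_span rfl) trivial
  have hbot : (⊤ : Submodule (Rk k) Q) = ⊥ :=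
    Submodule.eq_bot_of_le_smul_of_le_jacobson_bot (Ideal.span {xx k}) ⊤
      (Module.finite_def.1 inferInstance) hsmul
      ((Ideal.span_le).2 (Set.singleton_subset_iff.2 (xx_jac k)))
  have : (LinearMap.range restr).mkQ φ = 0 := by
    have : (LinearMap.range restr).mkQ φ ∈ (⊥ : Submodule (Rk k) Q) := hbot ▸ trivial
    simpa using this
  rw [Submodule.mkQ_apply, Submodule.Quotient.mk_eq_zero] at this
  obtain ⟨ψ, hψ⟩ := this
  exact ⟨ψ, fun y hy => by rw [← hψ]; rfl⟩
end LemmaA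

variable {k}

lemma xregs : ∀ {a : Rk k}, xx k * a = 0 → a = 0 := fun h => xreg k (by rw [h, mul_zero])

-- factor a functional killing the kernel through a surjection
lemma factor_through {A B : Type} [AddCommGroup A] [AddCommGroup B]
    [Module (Rk k) A] [Module (Rk k) B]
    (π : A →ₗ[Rk k] B) (hπ : Surjective π) (η : A →ₗ[Rk k] Rk k)
    (hker : ∀ a, π a = 0 → η a = 0) :
    ∃ g' : B →ₗ[Rk k] Rk k, ∀ a, g' (π a) = η a := by
  have wd : ∀ a a' : A, π a = π a' → η a = η a' := by
    intro a a' h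
    have := hker (a - a') (by rw [map_sub, h, sub_self])
    rw [map_sub, sub_eq_zero] at this
    exact this
  choose sec hsec using hπ
  refine ⟨{ toFun := fun bb => η (sec bb)
            map_add' := ?_
            map_smul' := ?_ }, ?_⟩
  · intro y z
    show η (sec (y + z)) = η (sec y) + η (sec z)
    rw [← map_add]
    exact wd _ _ (by rw [map_add, hsec, hsec, hsec])
  · intro r y
    show η (sec (r • y)) = r • η (sec y)
    rw [← map_smul]
    exact wd _ _ (by rw [map_smul, hsec, hsec])
  · intro a
    exact wd _ _ (hsec (π a))

lemma eval_surj {N : Type} [AddCommGroup N] [Module (Rk k) N] [Module.Finite (Rk k) N]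
    (hxN : ∀ m : N, xx k • m = 0 → m = 0) :
    Surjective (Module.Dual.eval (Rk k) N) := by
  obtain ⟨n, π, hπ⟩ := Module.Finite.exists_fin' (Rk k) N
  set j := π.dualMap with hj'
  have hj : Injective j := by
    intro g g' h
    refine LinearMap.ext fun m => ?_
    obtain ⟨a, rfl⟩ := hπ m
    exact congrFun (congrArg (fun (q : Module.Dual (Rk k) (Fin n → Rk k)) => ⇑q) h) a
  set K := LinearMap.range j with hK'
  have hK : ∀ η, xx k • η ∈ K → η ∈ K := by
    rintro η ⟨g, hg⟩
    have hker : ∀ a, π a = 0 → η a = 0 := by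
      intro a ha
      refine xregs ?_
      have : (j g) a = (xx k • η) a := by rw [hg]
      rw [LinearMap.dualMap_apply, ha, map_zero] at this
      simpa [smul_eq_mul] using this.symm
    obtain ⟨g', hg'⟩ := factor_through π hπ η hker
    refine ⟨g', ?_⟩
    refine LinearMap.ext fun a => ?_
    exact hg' a
  intro ξ
  obtain ⟨ψ, hψ⟩ := extend_functional ((Pi.basisFun (Rk k) (Fin n)).dualBasis) K hK
    (ξ.comp (LinearEquiv.ofInjective j hj).symm.toLinearMap)
  obtain ⟨u, hu⟩ := (Module.bijective_dual_eval (Rk k) (Fin n → Rk k)).2 ψ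
  refine ⟨π u, ?_⟩
  refine LinearMap.ext fun g => ?_
  have h1 : ψ (j g) = ξ g := by
    rw [hψ (j g) (LinearMap.mem_range_self j g)]
    have h0 : ((LinearEquiv.ofInjective j hj).symm
        ⟨j g, LinearMap.mem_range_self j g⟩) = g := by
      have e : (⟨j g, LinearMap.mem_range_self j g⟩ : LinearMap.range j) =
          LinearEquiv.ofInjective j hj g := rfl
      rw [e, LinearEquiv.symm_apply_apply]
    simp only [LinearMap.coe_comp, Function.comp_apply, LinearEquiv.coe_coe]
    rw [h0]
  have h2 : ψ (j g) = g (π u) := by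
    rw [← hu]
    rfl
  rw [Module.Dual.eval_apply, ← h2, h1]

lemma eval_sep {N : Type} [AddCommGroup N] [Module (Rk k) N] [Module.Finite (Rk k) N]
    (hxN : ∀ m : N, xx k • m = 0 → m = 0) :
    ∀ m : N, (∀ g : Module.Dual (Rk k) N, g m = 0) → m = 0 := by
    intro m hm
    obtain ⟨n, π, hπ⟩ := Module.Finite.exists_fin' (Rk k) N
    obtain ⟨u, hu⟩ := hπ m
    set K := LinearMap.ker π with hK'
    have hKsat : ∀ f, xx k • f ∈ K → f ∈ K := by
      intro f hf
      have : xx k • π f = 0 := by rw [← map_smul]; exact hf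
      exact LinearMap.mem_ker.2 (hxN _ this)
    have hext := extend_functional (Pi.basisFun (Rk k) (Fin n)) K hKsat
    choose Ψ hΨ using hext
    -- independence of the extension at u
    have indep : ∀ (φ : K →ₗ[Rk k] Rk k) (θ θ' : (Fin n → Rk k) →ₗ[Rk k] Rk k),
        (∀ (y) (hy : y ∈ K), θ y = φ ⟨y, hy⟩) → (∀ (y) (hy : y ∈ K), θ' y = φ ⟨y, hy⟩) →
        θ u = θ' u := by
      intro φ θ θ' h1 h2
      have hker : ∀ a, π a = 0 → (θ - θ') a = 0 := by
        intro a ha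
        have ha' : a ∈ K := LinearMap.mem_ker.2 ha
        simp only [LinearMap.sub_apply, h1 a ha', h2 a ha', sub_self]
      obtain ⟨g', hg'⟩ := factor_through π hπ (θ - θ') hker
      have h3 := hg' u
      rw [hu, hm g'] at h3
      have h4 : θ u - θ' u = 0 := by rw [← LinearMap.sub_apply, ← h3]
      exact sub_eq_zero.1 h4
    set lam : Module.Dual (Rk k) (Module.Dual (Rk k) K) :=
      { toFun := fun φ => Ψ φ u
        map_add' := fun φ φ' => by
          refine indep (φ + φ') (Ψ (φ + φ')) (Ψ φ + Ψ φ') (hΨ _) ?_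
          intro y hy
          simp only [LinearMap.add_apply, hΨ φ y hy, hΨ φ' y hy]
        map_smul' := fun r φ => by
          refine indep (r • φ) (Ψ (r • φ)) (r • Ψ φ) (hΨ _) ?_
          intro y hy
          simp only [LinearMap.smul_apply, hΨ φ y hy] } with hlam
    haveI : Module.Finite (Rk k) K := Module.Finite.iff_fg.2 (IsNoetherian.noetherian K)
    have hxK : ∀ y : K, xx k • y = 0 → y = 0 := by
      intro y hy
      refine Subtype.ext (funext fun i => xregs ?_)
      have h1 : (xx k • (y : Fin n → Rk k)) i = 0 := by
        rw [← Submodule.coe_smul, hy]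
        rfl
      rw [Pi.smul_apply, smul_eq_mul] at h1
      exact h1
    obtain ⟨z, hz⟩ := eval_surj hxK lam
    have hzφ : ∀ φ : Module.Dual (Rk k) K, φ z = Ψ φ u := fun φ =>
      congrArg (fun q => q φ) hz
    have hcoord : u = (z : Fin n → Rk k) := by
      funext i
      set θ : (Fin n → Rk k) →ₗ[Rk k] Rk k := LinearMap.proj i with hθ
      set φθ : Module.Dual (Rk k) K := θ.comp K.subtype with hφθ
      have e1 : θ u = Ψ φθ u :=
        (indep φθ (Ψ φθ) θ (hΨ φθ) (fun y hy => rfl)).symm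
      have e2 : Ψ φθ u = φθ z := (hzφ φθ).symm
      have e3 : φθ z = θ (z : Fin n → Rk k) := rfl
      exact e1.trans (e2.trans e3)
    rw [← hu, hcoord]
    exact LinearMap.mem_ker.1 z.2

lemma eval_inj {N : Type} [AddCommGroup N] [Module (Rk k) N] [Module.Finite (Rk k) N]
    (hxN : ∀ m : N, xx k • m = 0 → m = 0) :
    Injective (Module.Dual.eval (Rk k) N) := by
  have main := eval_sep hxN
  intro m m' h
  have : ∀ g : Module.Dual (Rk k) N, g (m - m') = 0 := by
    intro g
    have := congrArg (fun q => q g) h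
    simp only [Module.Dual.eval_apply] at this
    rw [map_sub, this, sub_self]
  have := main _ this
  exact sub_eq_zero.1 this

lemma extend_proj {M P0 : Type} [AddCommGroup M] [Module (Rk k) M] [Module.Finite (Rk k) M]
    [AddCommGroup P0] [Module (Rk k) P0] [Module.Projective (Rk k) P0]
    (hxM : ∀ m : M, xx k • m = 0 → m = 0)
    (π₀ : P0 →ₗ[Rk k] M) (hπ₀ : Surjective π₀)
    (φ : LinearMap.ker π₀ →ₗ[Rk k] Rk k) :
    ∃ ψ : P0 →ₗ[Rk k] Rk k, ∀ (y) (hy : y ∈ LinearMap.ker π₀), ψ y = φ ⟨y, hy⟩ := by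
  obtain ⟨n, ρ, hρ⟩ := Module.Finite.exists_fin' (Rk k) M
  obtain ⟨σ, hσ⟩ := Module.projective_lifting_property ρ π₀ hρ
  set b := Pi.basisFun (Rk k) (Fin n) with hb
  choose sec hsec using hπ₀
  set τ : (Fin n → Rk k) →ₗ[Rk k] P0 := b.constr ℕ (fun i => sec (ρ (b i))) with hτ
  have hτρ : ∀ v, π₀ (τ v) = ρ v := by
    have : π₀.comp τ = ρ := by
      refine b.ext fun i => ?_
      rw [LinearMap.comp_apply, hτ, Module.Basis.constr_basis, hsec]
    intro v
    exact DFunLike.congr_fun this v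
  have hKF : ∀ f, xx k • f ∈ LinearMap.ker ρ → f ∈ LinearMap.ker ρ := by
    intro f hf
    rw [LinearMap.mem_ker] at hf ⊢
    rw [map_smul] at hf
    exact hxM _ hf
  have hτ'mem : ∀ c : LinearMap.ker ρ, τ c ∈ LinearMap.ker π₀ := by
    intro c
    rw [LinearMap.mem_ker, hτρ]
    exact c.2
  set τ' : LinearMap.ker ρ →ₗ[Rk k] LinearMap.ker π₀ :=
    LinearMap.codRestrict _ (τ.comp (LinearMap.ker ρ).subtype) hτ'mem with hτ'
  obtain ⟨ψF, hψF⟩ := extend_functional b (LinearMap.ker ρ) hKF (φ.comp τ')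
  have hδmem : ∀ p : P0, (τ.comp σ - (LinearMap.id : P0 →ₗ[Rk k] P0)) p ∈ LinearMap.ker π₀ := by
    intro p
    rw [LinearMap.mem_ker]
    simp only [LinearMap.sub_apply, LinearMap.comp_apply, LinearMap.id_apply, map_sub, hτρ]
    rw [← LinearMap.comp_apply ρ σ, hσ, sub_self]
  set δ : P0 →ₗ[Rk k] LinearMap.ker π₀ :=
    LinearMap.codRestrict _ (τ.comp σ - (LinearMap.id : P0 →ₗ[Rk k] P0)) hδmem with hδ
  refine ⟨ψF.comp σ - φ.comp δ, ?_⟩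
  intro y hy
  have hσy : σ y ∈ LinearMap.ker ρ := by
    rw [LinearMap.mem_ker, ← LinearMap.comp_apply ρ σ, hσ]
    exact hy
  have e1 : ψF (σ y) = φ (τ' ⟨σ y, hσy⟩) := by
    rw [hψF (σ y) hσy]
    rfl
  have e2 : τ' ⟨σ y, hσy⟩ = ⟨τ (σ y), hτ'mem ⟨σ y, hσy⟩⟩ := rfl
  have e3 : δ y = ⟨τ (σ y) - y, hδmem y⟩ := rfl
  simp only [LinearMap.sub_apply, LinearMap.comp_apply, e1, e2, e3]
  rw [← map_sub]
  congr 1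
  refine Subtype.ext ?_
  show τ (σ y) - (τ (σ y) - y) = y
  exact sub_sub_cancel _ _

lemma ext_vanish (M : Type) [AddCommGroup M] [Module (Rk k) M] [Module.Finite (Rk k) M]
    (hxM : ∀ m : M, xx k • m = 0 → m = 0) :
    Limits.IsZero (((Ext (Rk k) (ModuleCat (Rk k)) 1).obj (op (ModuleCat.of (Rk k) M))).obj
      (ModuleCat.of (Rk k) (Rk k))) := by
  set X : ModuleCat (Rk k) := ModuleCat.of (Rk k) M with hX
  set Y : ModuleCat (Rk k) := ModuleCat.of (Rk k) (Rk k) with hY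
  set P : ProjectiveResolution X := projectiveResolution X with hP
  refine Limits.IsZero.of_iso ?_ (P.isoExt 1 Y)
  rw [← HomologicalComplex.exactAt_iff_isZero_homology,
    HomologicalComplex.exactAt_iff' _ 0 1 2 (by simp) (by simp),
    ShortComplex.moduleCat_exact_iff]
  intro α hα
  change (P.complex.X 1 ⟶ Y) at α
  -- α : P.complex.X 1 ⟶ Y with (d 2 1) ≫ α = 0
  have hα2 : P.complex.d 2 1 ≫ (α : P.complex.X 1 ⟶ Y) = 0 := by
    exact hα
  have hsurj : Surjective (P.π.f 0) := (ModuleCat.epi_iff_surjective _).1 inferInstance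
  haveI : Module.Projective (Rk k) ↑(P.complex.X 0) :=
    inferInstance
  set π₀ : ↑(P.complex.X 0) →ₗ[Rk k] M := (P.π.f 0 : P.complex.X 0 ⟶ X).hom with hπ₀
  have hd10 : ∀ p, π₀ ((P.complex.d 1 0 : P.complex.X 1 ⟶ P.complex.X 0) p) = 0 := by
    intro p
    have := P.complex_d_comp_π_f_zero
    exact congrArg (fun q => q.hom p) this
  set f : ↑(P.complex.X 1) →ₗ[Rk k] ↥(LinearMap.ker π₀) :=
    LinearMap.codRestrict _ (P.complex.d 1 0 : P.complex.X 1 ⟶ P.complex.X 0).hom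
      (fun p => LinearMap.mem_ker.2 (hd10 p)) with hf
  have hex0 := (ShortComplex.moduleCat_exact_iff _).1 P.exact₀
  have hex1 := (ShortComplex.moduleCat_exact_iff _).1 (P.exact_succ 0)
  have fsurj : Surjective f := by
    intro c
    obtain ⟨x1, hx1⟩ := hex0 c.1 (LinearMap.mem_ker.1 c.2)
    exact ⟨x1, Subtype.ext hx1⟩
  have hker : ∀ a, f a = 0 → (α : P.complex.X 1 ⟶ Y) a = 0 := by
    intro a ha
    have hda : (P.complex.d 1 0 : P.complex.X 1 ⟶ P.complex.X 0) a = 0 :=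
      congrArg Subtype.val ha
    obtain ⟨y, hy⟩ := hex1 a hda
    rw [← hy]
    simpa using congrArg (fun q => q.hom y) hα2
  obtain ⟨φ, hφ⟩ := factor_through f fsurj (α : P.complex.X 1 ⟶ Y).hom hker
  obtain ⟨ψ, hψ⟩ := extend_proj hxM π₀ hsurj φ
  refine ⟨(ModuleCat.ofHom ψ : P.complex.X 0 ⟶ Y), ?_⟩
  show (P.complex.linearYonedaObj (Rk k) Y).d 0 1 _ = _
  have : (P.complex.d 1 0 : P.complex.X 1 ⟶ P.complex.X 0) ≫ (ModuleCat.ofHom ψ : P.complex.X 0 ⟶ Y)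
      = (α : P.complex.X 1 ⟶ Y) := by
    refine ModuleCat.hom_ext (LinearMap.ext fun p => ?_)
    show ψ ((P.complex.d 1 0 : P.complex.X 1 ⟶ P.complex.X 0) p) = _
    rw [hψ _ (LinearMap.mem_ker.2 (hd10 p))]
    have : (⟨(P.complex.d 1 0 : P.complex.X 1 ⟶ P.complex.X 0) p,
        LinearMap.mem_ker.2 (hd10 p)⟩ : LinearMap.ker π₀) = f p := rfl
    rw [this, hφ p]
  exact this

theorem torsionFree_ext_vanishing_and_reflexive
    (M : Type) [AddCommGroup M] [Module (DualNumber (Ak k)) M]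
    [Module.Finite (DualNumber (Ak k)) M]
    (hx : Function.Injective
      (fun m : M => ((TrivSqZeroExt.inl (PowerSeries.X : Ak k)) : DualNumber (Ak k)) • m)) :
    Limits.IsZero
      ((((Ext (DualNumber (Ak k)) (ModuleCat (DualNumber (Ak k))) 1).obj
          (op (ModuleCat.of (DualNumber (Ak k)) M))).obj
          (ModuleCat.of (DualNumber (Ak k)) (DualNumber (Ak k))))) ∧
    Function.Bijective (Module.Dual.eval (DualNumber (Ak k)) M) := by
  have hxM : ∀ m : M, xx k • m = 0 → m = 0 := by
    intro m hm
    refine hx (a₁ := m) (a₂ := 0) ?_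
    show xx k • m = xx k • (0 : M)
    rw [hm, smul_zero]
  exact ⟨ext_vanish M hxM, eval_inj hxM, eval_surj hxM⟩

end
end
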